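/- Let ω be a weight function in the class W₀ and let {W^(ℓ) : ℓ > 0} be its associated weight matrix. Then for all x > 0 and all c ∈ ℕ_{>0}: g(W^(cx)) ≤ g(W^(x)) ≤ 4·g(W^(cx)) and g(W^(x)) ≤ g(W^(x/c)) ≤ 4·g(W^(x)) (inequalities understood in ℕ ∪ {+∞}). -/
import Mathlib


open Real Filter Set

noncomputable section

/-- The class `LC` of normalized log-convex sequences with `(M_p)^{1/p} → ∞`. -/
def IsLC (M : ℕ → ℝ) : Prop :=
  (∀ p, 0 < M p) ∧ M 0 = 1 ∧ 1 ≤ M 1 ∧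
  (∀ p : ℕ, 1 ≤ p → (M p) ^ 2 ≤ M (p - 1) * M (p + 1)) ∧
  Filter.Tendsto (fun p : ℕ => (M p) ^ ((p : ℝ)⁻¹)) Filter.atTop Filter.atTop

/-- The sequence of quotients `μ_0 = 1`, `μ_p = M_p / M_{p-1}`. -/
def seqQuot (M : ℕ → ℝ) (p : ℕ) : ℝ :=
  if p = 0 then 1 else M p / M (p - 1)

/-- The associated weight function `ω_M(t) = sup_p log(t^p / M_p)`. -/
def omegaM (M : ℕ → ℝ) (t : ℝ) : ℝ :=
  ⨆ p : ℕ, Real.log (t ^ p / M p)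

/-- The auxiliary sequence `M̃^a_p = (M_{ap})^{1/a}`. -/
def tildeSeq (M : ℕ → ℝ) (a : ℕ) (p : ℕ) : ℝ :=
  (M (a * p)) ^ ((a : ℝ)⁻¹)

/-- Condition (genmg) for the parameter `d`. -/
def genMG (M : ℕ → ℝ) (d : ℕ) : Prop :=
  ∃ A : ℝ, 1 ≤ A ∧ ∀ p : ℕ, 1 ≤ p →
    seqQuot M p ≤ A * (M (d * p)) ^ (((d : ℝ) * (p : ℝ))⁻¹)

/-- The moderate growth index `g(M) ∈ ℕ ∪ {+∞}`. -/
def gIndex (M : ℕ → ℝ) : ℕ∞ :=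
  sInf {e : ℕ∞ | ∃ n : ℕ, 0 < n ∧ genMG M n ∧ e = (n : ℕ∞)}

/-- The relation `M ≼ N`, i.e. `sup_{p ≥ 1} (M_p/N_p)^{1/p} < ∞`. -/
def Preceq (M N : ℕ → ℝ) : Prop :=
  ∃ C : ℝ, ∀ p : ℕ, 1 ≤ p → (M p / N p) ^ ((p : ℝ)⁻¹) ≤ C

/-- The class `W₀` of normalized weight functions. -/
def IsW0 (ω : ℝ → ℝ) : Prop :=
  ContinuousOn ω (Set.Ici 0) ∧
  MonotoneOn ω (Set.Ici 0) ∧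
  (∀ t ∈ Set.Icc (0 : ℝ) 1, ω t = 0) ∧
  Filter.Tendsto ω Filter.atTop Filter.atTop ∧
  (fun t => Real.log t) =o[Filter.atTop] ω ∧
  ConvexOn ℝ Set.univ (fun t => ω (Real.exp t))

/-- The Legendre–Fenchel–Young conjugate `φ*_ω(x) = sup{xy − ω(e^y) : y ≥ 0}`. -/
def phiStar (ω : ℝ → ℝ) (x : ℝ) : ℝ :=
  sSup {z : ℝ | ∃ y : ℝ, 0 ≤ y ∧ z = x * y - ω (Real.exp y)}

/-- The associated weight matrix `W^(ℓ)_p = exp(φ*_ω(ℓp)/ℓ)`. -/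
def Wmat (ω : ℝ → ℝ) (l : ℝ) (p : ℕ) : ℝ :=
  Real.exp (phiStar ω (l * p) / l)

/-- Condition `(ω₆)`. -/
def Omega6 (ω : ℝ → ℝ) : Prop :=
  ∃ H : ℝ, 1 ≤ H ∧ ∀ t : ℝ, 0 ≤ t → 2 * ω t ≤ ω (H * t) + H

/-- The counting function `Σ_M(t) = #{p ≥ 1 : μ_p ≤ t}`. -/
def SigmaM (M : ℕ → ℝ) (t : ℝ) : ℕ :=
  Set.ncard {p : ℕ | 1 ≤ p ∧ seqQuot M p ≤ t}

end

section Aux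

variable {ω : ℝ → ℝ}

lemma w0_nonneg (hω : IsW0 ω) {t : ℝ} (ht : 0 ≤ t) : 0 ≤ ω t := by
  rcases le_or_gt t 1 with h | h
  · exact le_of_eq (hω.2.2.1 t ⟨ht, h⟩).symm
  · have h0 := hω.2.1 (Set.mem_Ici.mpr (by norm_num : (0:ℝ) ≤ 1)) (Set.mem_Ici.mpr ht) h.le
    rwa [hω.2.2.1 1 ⟨by norm_num, le_refl 1⟩] at h0

lemma phiStar_mem_zero (hω : IsW0 ω) (x : ℝ) :
    (0:ℝ) ∈ {z : ℝ | ∃ y : ℝ, 0 ≤ y ∧ z = x * y - ω (Real.exp y)} := by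
  refine ⟨0, le_refl 0, ?_⟩
  rw [Real.exp_zero, hω.2.2.1 1 ⟨by norm_num, le_refl 1⟩]
  ring

lemma phiStar_bddAbove (hω : IsW0 ω) {x : ℝ} (hx : 0 ≤ x) :
    BddAbove {z : ℝ | ∃ y : ℝ, 0 ≤ y ∧ z = x * y - ω (Real.exp y)} := by
  have hc : (0:ℝ) < 1/(x+1) := by positivity
  obtain ⟨T, hT⟩ := Filter.eventually_atTop.mp ((hω.2.2.2.2.1).def hc)
  set T' : ℝ := max T 1 with hT'def
  refine ⟨x * max (Real.log T') 0, ?_⟩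
  rintro z ⟨y, hy, rfl⟩
  have hωnn : 0 ≤ ω (Real.exp y) := w0_nonneg hω (Real.exp_pos y).le
  have hmax0 : 0 ≤ x * max (Real.log T') 0 := mul_nonneg hx (le_max_right _ _)
  rcases le_or_gt T' (Real.exp y) with h | h
  · have hlog := hT _ (le_trans (le_max_left T 1) h)
    rw [Real.log_exp, Real.norm_eq_abs, Real.norm_eq_abs, abs_of_nonneg hy,
      abs_of_nonneg hωnn] at hlog
    have hx1 : (0:ℝ) < x + 1 := by linarith
    have h2 : y * (x+1) ≤ ω (Real.exp y) :=
      calc y * (x+1) ≤ (1/(x+1) * ω (Real.exp y)) * (x+1) :=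
            mul_le_mul_of_nonneg_right hlog hx1.le
        _ = ω (Real.exp y) := by field_simp
    nlinarith
  · have hy2 : y ≤ Real.log T' := by
      have h1 : Real.exp y ≤ T' := h.le
      calc y = Real.log (Real.exp y) := (Real.log_exp y).symm
        _ ≤ Real.log T' := Real.log_le_log (Real.exp_pos y) h1
    have h3 : x * y ≤ x * max (Real.log T') 0 :=
      mul_le_mul_of_nonneg_left (le_trans hy2 (le_max_left _ _)) hx
    linarith

lemma phiStar_nonneg (hω : IsW0 ω) {x : ℝ} (hx : 0 ≤ x) : 0 ≤ phiStar ω x :=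
  le_csSup (phiStar_bddAbove hω hx) (phiStar_mem_zero hω x)

lemma phiStar_zero (hω : IsW0 ω) : phiStar ω 0 = 0 := by
  refine le_antisymm ?_ (phiStar_nonneg hω le_rfl)
  apply csSup_le ⟨0, phiStar_mem_zero hω 0⟩
  rintro z ⟨y, hy, rfl⟩
  have := w0_nonneg hω (Real.exp_pos y).le
  nlinarith

lemma phiStar_convexOn (hω : IsW0 ω) : ConvexOn ℝ (Set.Ici 0) (phiStar ω) := by
  refine ⟨convex_Ici 0, ?_⟩
  intro a ha b hb s t hs ht hst
  simp only [smul_eq_mul]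
  apply csSup_le ⟨0, phiStar_mem_zero hω _⟩
  rintro z ⟨y, hy, rfl⟩
  have h1 : a * y - ω (Real.exp y) ≤ phiStar ω a :=
    le_csSup (phiStar_bddAbove hω ha) ⟨y, hy, rfl⟩
  have h2 : b * y - ω (Real.exp y) ≤ phiStar ω b :=
    le_csSup (phiStar_bddAbove hω hb) ⟨y, hy, rfl⟩
  have key : (s*a + t*b)*y - ω (Real.exp y)
      = s*(a*y - ω (Real.exp y)) + t*(b*y - ω (Real.exp y)) := by
    linear_combination (ω (Real.exp y)) * hst
  rw [key]
  exact add_le_add (mul_le_mul_of_nonneg_left h1 hs) (mul_le_mul_of_nonneg_left h2 ht)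

lemma slope_le_slope' {f : ℝ → ℝ} (hf : ConvexOn ℝ (Set.Ici (0:ℝ)) f)
    {a b a' b' : ℝ} (ha : 0 ≤ a) (h1 : a ≤ a') (h2 : b ≤ b') (h3 : a < b) (h4 : a' < b') :
    (f b - f a)/(b - a) ≤ (f b' - f a')/(b' - a') := by
  have hb : (0:ℝ) ≤ b := le_of_lt (lt_of_le_of_lt ha h3)
  have ha' : (0:ℝ) ≤ a' := le_trans ha h1
  have hb' : (0:ℝ) ≤ b' := le_trans hb h2
  have hab' : a < b' := lt_of_lt_of_le h3 h2
  have step1 : (f b - f a)/(b - a) ≤ (f b' - f a)/(b' - a) :=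
    hf.secant_mono (Set.mem_Ici.mpr ha) (Set.mem_Ici.mpr hb) (Set.mem_Ici.mpr hb')
      h3.ne' hab'.ne' h2
  have step2 : (f a - f b')/(a - b') ≤ (f a' - f b')/(a' - b') :=
    hf.secant_mono (Set.mem_Ici.mpr hb') (Set.mem_Ici.mpr ha) (Set.mem_Ici.mpr ha')
      hab'.ne h4.ne h1
  have e1 : (f a - f b')/(a - b') = (f b' - f a)/(b' - a) := by
    rw [show f a - f b' = -(f b' - f a) by ring, show a - b' = -(b' - a) by ring,
      neg_div_neg_eq]
  have e2 : (f a' - f b')/(a' - b') = (f b' - f a')/(b' - a') := by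
    rw [show f a' - f b' = -(f b' - f a') by ring, show a' - b' = -(b' - a') by ring,
      neg_div_neg_eq]
  rw [e1, e2] at step2
  linarith

lemma phiStar_div_mono (hω : IsW0 ω) {s t : ℝ} (hs : 0 < s) (hst : s ≤ t) :
    phiStar ω s / s ≤ phiStar ω t / t := by
  have h := slope_le_slope' (phiStar_convexOn hω) (le_refl 0) (le_refl 0) hst hs
    (lt_of_lt_of_le hs hst)
  rwa [phiStar_zero hω, sub_zero, sub_zero, sub_zero, sub_zero] at h

end Aux


section Aux2

variable {ω : ℝ → ℝ} {l : ℝ}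

/-- Logarithmic form of (genmg) for the weight matrix. -/
def LogGen (ω : ℝ → ℝ) (l : ℝ) (d : ℕ) (B : ℝ) : Prop :=
  ∀ p : ℕ, 1 ≤ p →
    (phiStar ω (l * p) - phiStar ω (l * ((p:ℝ) - 1))) / l ≤
      B + phiStar ω (l * ((d:ℝ) * p)) / (l * ((d:ℝ) * p))

lemma genMG_iff_log (hl : 0 < l) {d : ℕ} (hd : 1 ≤ d) :
    genMG (Wmat ω l) d ↔ ∃ B : ℝ, 0 ≤ B ∧ LogGen ω l d B := by
  have key : ∀ A : ℝ, 0 < A → ∀ p : ℕ, 1 ≤ p →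
      ((seqQuot (Wmat ω l) p ≤ A * (Wmat ω l (d*p)) ^ (((d:ℝ) * (p:ℝ))⁻¹)) ↔
      ((phiStar ω (l * p) - phiStar ω (l * ((p:ℝ) - 1))) / l ≤
        Real.log A + phiStar ω (l * ((d:ℝ) * p)) / (l * ((d:ℝ) * p)))) := by
    intro A hA p hp
    have hp0 : p ≠ 0 := Nat.one_le_iff_ne_zero.mp hp
    have hdp : (0:ℝ) < (d:ℝ) * (p:ℝ) := by
      have : (0:ℝ) < (d:ℝ) := by exact_mod_cast hd
      have : (0:ℝ) < (p:ℝ) := by exact_mod_cast hp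
      positivity
    have e1 : seqQuot (Wmat ω l) p
        = Real.exp ((phiStar ω (l * p) - phiStar ω (l * ((p:ℝ) - 1))) / l) := by
      rw [seqQuot, if_neg hp0]
      unfold Wmat
      rw [← Real.exp_sub, sub_div]
      congr 3
      rw [Nat.cast_sub hp, Nat.cast_one]
    have e2 : A * (Wmat ω l (d*p)) ^ (((d:ℝ) * (p:ℝ))⁻¹)
        = Real.exp (Real.log A + phiStar ω (l * ((d:ℝ) * p)) / (l * ((d:ℝ) * p))) := by
      unfold Wmat
      rw [← Real.exp_mul, Real.exp_add, Real.exp_log hA]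
      congr 2
      have hc : ((d*p:ℕ):ℝ) = (d:ℝ)*(p:ℝ) := by push_cast; ring
      rw [hc]
      field_simp
    rw [e1, e2, Real.exp_le_exp]
  constructor
  · rintro ⟨A, hA, h⟩
    exact ⟨Real.log A, Real.log_nonneg hA, fun p hp =>
      (key A (by linarith) p hp).mp (h p hp)⟩
  · rintro ⟨B, hB, h⟩
    refine ⟨Real.exp B, by
      calc (1:ℝ) = Real.exp 0 := Real.exp_zero.symm
        _ ≤ Real.exp B := Real.exp_le_exp.mpr hB, fun p hp => ?_⟩
    refine (key (Real.exp B) (Real.exp_pos B) p hp).mpr ?_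
    rw [Real.log_exp B]
    exact h p hp

end Aux2

section Aux3

variable {ω : ℝ → ℝ} {l : ℝ}

lemma loggen_scale (hω : IsW0 ω) (hl : 0 < l) {c d : ℕ} (hc : 1 ≤ c) (hd : 1 ≤ d) {B : ℝ}
    (h : LogGen ω l d B) : LogGen ω ((c:ℝ) * l) d B := by
  intro p hp
  have hC : (1:ℝ) ≤ (c:ℝ) := by exact_mod_cast hc
  have hP : (1:ℝ) ≤ (p:ℝ) := by exact_mod_cast hp
  have hcp : 1 ≤ c * p := Nat.one_le_iff_ne_zero.mpr (Nat.mul_ne_zero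
    (Nat.one_le_iff_ne_zero.mp hc) (Nat.one_le_iff_ne_zero.mp hp))
  have h2 := h (c*p) hcp
  push_cast at h2
  set f := phiStar ω with hf
  -- slope step : a = c*l*(p-1), b = c*l*p, a' = l*(c*p-1), b' = l*(c*p)
  have hslope := slope_le_slope' (f := f) (phiStar_convexOn hω)
    (a := (c:ℝ)*l*((p:ℝ)-1)) (b := (c:ℝ)*l*p) (a' := l*((c:ℝ)*p-1)) (b' := l*((c:ℝ)*p))
    (mul_nonneg (mul_nonneg (by linarith) hl.le) (by linarith))
    (by nlinarith) (le_of_eq (by ring)) (by nlinarith) (by nlinarith)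
  rw [show (c:ℝ)*l*p - (c:ℝ)*l*((p:ℝ)-1) = (c:ℝ)*l by ring,
    show l*((c:ℝ)*p) - l*((c:ℝ)*p-1) = l by ring] at hslope
  have hr1 : l * ((c:ℝ)*(p:ℝ)) = (c:ℝ)*l*(p:ℝ) := by ring
  have hr2 : l * ((d:ℝ) * ((c:ℝ)*(p:ℝ))) = (c:ℝ)*l*((d:ℝ)*(p:ℝ)) := by ring
  rw [hr1, hr2] at h2
  rw [hr1] at hslope
  exact le_trans hslope h2

lemma loggen_unscale (hω : IsW0 ω) (hl : 0 < l) {c d : ℕ} (hc : 1 ≤ c) (hd : 1 ≤ d) {B : ℝ}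
    (hB : 0 ≤ B) (h : LogGen ω ((c:ℝ) * l) d B) :
    ∃ B' : ℝ, 0 ≤ B' ∧ LogGen ω l (2*d) B' := by
  set f := phiStar ω with hf
  have hC : (1:ℝ) ≤ (c:ℝ) := by exact_mod_cast hc
  have hD : (1:ℝ) ≤ (d:ℝ) := by exact_mod_cast hd
  set g : ℕ → ℝ := fun p =>
    (f (l*p) - f (l*((p:ℝ)-1)))/l - f (l*(((2*d:ℕ):ℝ)*p))/(l*(((2*d:ℕ):ℝ)*p)) with hg
  have hne : (Finset.Icc 1 (2*c)).Nonempty := by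
    refine ⟨1, Finset.mem_Icc.mpr ⟨le_refl 1, by omega⟩⟩
  set E : ℝ := (Finset.Icc 1 (2*c)).sup' hne g with hE
  refine ⟨max B E, le_trans hB (le_max_left _ _), ?_⟩
  intro p hp
  have hP : (1:ℝ) ≤ (p:ℝ) := by exact_mod_cast hp
  rcases le_or_gt p (2*c) with hsmall | hbig
  · -- small p : use the finite sup
    have hmem : p ∈ Finset.Icc 1 (2*c) := Finset.mem_Icc.mpr ⟨hp, hsmall⟩
    have := Finset.le_sup' g hmem
    have hgp : g p ≤ E := this
    rw [hg] at hgp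
    simp only at hgp
    have : (f (l*p) - f (l*((p:ℝ)-1)))/l
        ≤ E + f (l*(((2*d:ℕ):ℝ)*p))/(l*(((2*d:ℕ):ℝ)*p)) := by linarith
    exact le_trans this (by gcongr; exact le_max_right _ _)
  · -- large p
    set q : ℕ := (p + c - 2)/c + 1 with hq
    have hq1 : 1 ≤ q := by rw [hq]; exact Nat.succ_le_succ (Nat.zero_le _)
    -- Nat facts
    have hdm := Nat.div_add_mod (p + c - 2) c
    have hml : (p + c - 2) % c < c := Nat.mod_lt _ (by omega)
    have hKn : p - 1 ≤ c * ((p + c - 2)/c) ∧ c * ((p + c - 2)/c) ≤ p + c - 2 := by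
      generalize hK : c * ((p + c - 2)/c) = K at hdm ⊢
      omega
    have hA : (p:ℝ) - 1 ≤ (c:ℝ) * ((q:ℝ) - 1) := by
      have h1 : ((p - 1 : ℕ):ℝ) ≤ ((c * ((p+c-2)/c) : ℕ):ℝ) := by exact_mod_cast hKn.1
      have h2 : ((q:ℝ) - 1) = (((p+c-2)/c : ℕ):ℝ) := by
        rw [hq]; push_cast; ring
      rw [h2]
      push_cast [hp] at h1 ⊢
      linarith
    have hCq : (c:ℝ) * (q:ℝ) ≤ (p:ℝ) + 2*(c:ℝ) - 2 := by
      have h1 : ((c * ((p+c-2)/c) : ℕ):ℝ) ≤ ((p + c - 2 : ℕ):ℝ) := by exact_mod_cast hKn.2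
      have h2 : ((p + c - 2 : ℕ):ℝ) = (p:ℝ) + (c:ℝ) - 2 := by
        push_cast [(by omega : 2 ≤ p + c)]
        ring
      have h3 : (c:ℝ)*(q:ℝ) = ((c * ((p+c-2)/c) : ℕ):ℝ) + c := by
        rw [hq]; push_cast; ring
      rw [h2] at h1
      linarith
    have hPbig : 2*(c:ℝ) + 1 ≤ (p:ℝ) := by exact_mod_cast hbig
    have hQ1 : (1:ℝ) ≤ (q:ℝ) := by exact_mod_cast hq1
    -- slope step
    have hcl : (0:ℝ) < (c:ℝ)*l := mul_pos (by linarith) hl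
    have haa : l*((p:ℝ)-1) ≤ (c:ℝ)*l*((q:ℝ)-1) := by
      have := mul_le_mul_of_nonneg_left hA hl.le
      linarith
    have hPQ : (p:ℝ) ≤ (c:ℝ)*(q:ℝ) := by nlinarith
    have hbb : l*(p:ℝ) ≤ (c:ℝ)*l*(q:ℝ) := by
      have := mul_le_mul_of_nonneg_left hPQ hl.le
      linarith
    have hab : l*((p:ℝ)-1) < l*(p:ℝ) := by linarith
    have hab' : (c:ℝ)*l*((q:ℝ)-1) < (c:ℝ)*l*(q:ℝ) := by nlinarith
    have hslope := slope_le_slope' (f := f) (phiStar_convexOn hω)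
      (a := l*((p:ℝ)-1)) (b := l*p) (a' := (c:ℝ)*l*((q:ℝ)-1)) (b' := (c:ℝ)*l*(q:ℝ))
      (mul_nonneg hl.le (by linarith)) haa hbb hab hab'
    rw [show l*(p:ℝ) - l*((p:ℝ)-1) = l by ring,
      show (c:ℝ)*l*(q:ℝ) - (c:ℝ)*l*((q:ℝ)-1) = (c:ℝ)*l by ring] at hslope
    -- hypothesis at q
    have h2 := h q hq1
    -- root monotonicity
    have hs : (0:ℝ) < (c:ℝ)*l*((d:ℝ)*(q:ℝ)) :=
      mul_pos hcl (mul_pos (by linarith) (by linarith))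
    have hst : (c:ℝ)*l*((d:ℝ)*(q:ℝ)) ≤ l*(((2*d:ℕ):ℝ)*(p:ℝ)) := by
      rw [show ((2*d:ℕ):ℝ) = 2*(d:ℝ) by push_cast; ring]
      have hcq2 : (c:ℝ)*(q:ℝ) ≤ 2*(p:ℝ) := by linarith
      have : 0 ≤ l*(d:ℝ)*(2*(p:ℝ) - (c:ℝ)*(q:ℝ)) :=
        mul_nonneg (mul_nonneg hl.le (by linarith)) (by linarith)
      linarith
    have hroot := phiStar_div_mono hω hs hst
    rw [← hf] at hroot
    calc (f (l*p) - f (l*((p:ℝ)-1)))/l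
        ≤ (f ((c:ℝ)*l*(q:ℝ)) - f ((c:ℝ)*l*((q:ℝ)-1)))/((c:ℝ)*l) := hslope
      _ ≤ B + f ((c:ℝ)*l*((d:ℝ)*(q:ℝ)))/((c:ℝ)*l*((d:ℝ)*(q:ℝ))) := h2
      _ ≤ B + f (l*(((2*d:ℕ):ℝ)*(p:ℝ)))/(l*(((2*d:ℕ):ℝ)*(p:ℝ))) := by linarith
      _ ≤ max B E + f (l*(((2*d:ℕ):ℝ)*(p:ℝ)))/(l*(((2*d:ℕ):ℝ)*(p:ℝ))) := by
          gcongr; exact le_max_left _ _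

lemma genMG_scale (hω : IsW0 ω) (hl : 0 < l) {c d : ℕ} (hc : 1 ≤ c) (hd : 1 ≤ d)
    (h : genMG (Wmat ω l) d) : genMG (Wmat ω ((c:ℝ) * l)) d := by
  have hcl : (0:ℝ) < (c:ℝ) * l := mul_pos (by exact_mod_cast hc) hl
  rw [genMG_iff_log hl hd] at h
  rw [genMG_iff_log hcl hd]
  obtain ⟨B, hB, h⟩ := h
  exact ⟨B, hB, loggen_scale hω hl hc hd h⟩

lemma genMG_unscale (hω : IsW0 ω) (hl : 0 < l) {c d : ℕ} (hc : 1 ≤ c) (hd : 1 ≤ d)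
    (h : genMG (Wmat ω ((c:ℝ) * l)) d) : genMG (Wmat ω l) (2*d) := by
  have hcl : (0:ℝ) < (c:ℝ) * l := mul_pos (by exact_mod_cast hc) hl
  rw [genMG_iff_log hcl hd] at h
  rw [genMG_iff_log hl (by omega : 1 ≤ 2*d)]
  obtain ⟨B, hB, h⟩ := h
  obtain ⟨B', hB', h'⟩ := loggen_unscale hω hl hc hd hB h
  exact ⟨B', hB', h'⟩

lemma gIndex_le {M : ℕ → ℝ} {n : ℕ} (hn : 0 < n) (h : genMG M n) : gIndex M ≤ (n:ℕ∞) :=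
  sInf_le ⟨n, hn, h, rfl⟩

lemma gIndex_spec {M : ℕ → ℝ} (h : gIndex M ≠ ⊤) :
    ∃ n : ℕ, 0 < n ∧ genMG M n ∧ gIndex M = (n:ℕ∞) := by
  have hS : {e : ℕ∞ | ∃ n : ℕ, 0 < n ∧ genMG M n ∧ e = (n : ℕ∞)}.Nonempty := by
    by_contra hd
    exact h (by rw [gIndex, Set.not_nonempty_iff_eq_empty.mp hd]; exact sInf_empty)
  obtain ⟨e, n, hn, hg, rfl⟩ := hS
  have hT : {n : ℕ | 0 < n ∧ genMG M n}.Nonempty := ⟨n, hn, hg⟩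
  have hmem := Nat.sInf_mem hT
  refine ⟨sInf {n : ℕ | 0 < n ∧ genMG M n}, hmem.1, hmem.2, le_antisymm
    (gIndex_le hmem.1 hmem.2) ?_⟩
  apply le_sInf
  rintro e ⟨m, hm, hgm, rfl⟩
  exact_mod_cast Nat.sInf_le (show m ∈ {n : ℕ | 0 < n ∧ genMG M n} from ⟨hm, hgm⟩)

lemma gIndex_pair (hω : IsW0 ω) (hl : 0 < l) {c : ℕ} (hc : 1 ≤ c) :
    gIndex (Wmat ω ((c:ℝ) * l)) ≤ gIndex (Wmat ω l) ∧
      gIndex (Wmat ω l) ≤ 4 * gIndex (Wmat ω ((c:ℝ) * l)) := by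
  constructor
  · apply sInf_le_sInf
    rintro e ⟨n, hn, hg, rfl⟩
    exact ⟨n, hn, genMG_scale hω hl hc hn hg, rfl⟩
  · rcases eq_or_ne (gIndex (Wmat ω ((c:ℝ) * l))) ⊤ with htop | htop
    · rw [htop]
      rw [show (4 : ℕ∞) * ⊤ = ⊤ from by simp]
      exact le_top
    · obtain ⟨n, hn, hg, heq⟩ := gIndex_spec htop
      have h2 : genMG (Wmat ω l) (2*n) := genMG_unscale hω hl hc hn hg
      calc gIndex (Wmat ω l) ≤ ((2*n : ℕ) : ℕ∞) := gIndex_le (by omega) h2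
        _ ≤ ((4*n : ℕ) : ℕ∞) := by exact_mod_cast (show 2*n ≤ 4*n by omega)
        _ = 4 * gIndex (Wmat ω ((c:ℝ) * l)) := by rw [heq]; push_cast; ring

theorem stmt0' (ω : ℝ → ℝ) (hω : IsW0 ω) (x : ℝ) (hx : 0 < x) (c : ℕ) (hc : 0 < c) :
    (gIndex (Wmat ω ((c : ℝ) * x)) ≤ gIndex (Wmat ω x) ∧
      gIndex (Wmat ω x) ≤ 4 * gIndex (Wmat ω ((c : ℝ) * x))) ∧
    (gIndex (Wmat ω x) ≤ gIndex (Wmat ω (x / (c : ℝ))) ∧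
      gIndex (Wmat ω (x / (c : ℝ))) ≤ 4 * gIndex (Wmat ω x)) := by
  have hc1 : 1 ≤ c := hc
  have hcR : (0:ℝ) < (c:ℝ) := by exact_mod_cast hc
  have hxc : 0 < x / (c:ℝ) := div_pos hx hcR
  have hfix : (c:ℝ) * (x / (c:ℝ)) = x := by field_simp
  refine ⟨gIndex_pair hω hx hc1, ?_⟩
  have := gIndex_pair hω hxc hc1
  rwa [hfix] at this

end Aux3


theorem stmt0 (ω : ℝ → ℝ) (hω : IsW0 ω) (x : ℝ) (hx : 0 < x) (c : ℕ) (hc : 0 < c) :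
    (gIndex (Wmat ω ((c : ℝ) * x)) ≤ gIndex (Wmat ω x) ∧
      gIndex (Wmat ω x) ≤ 4 * gIndex (Wmat ω ((c : ℝ) * x))) ∧
    (gIndex (Wmat ω x) ≤ gIndex (Wmat ω (x / (c : ℝ))) ∧
      gIndex (Wmat ω (x / (c : ℝ))) ≤ 4 * gIndex (Wmat ω x)) :=
  stmt0' ω hω x hx c hc
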